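/- Let A_eq ∈ ℝ^{p×n} and A_in ∈ ℝ^{q×n} be entrywise nonnegative with every row of A_eq and of A_in having positive sum, let D_eq, D_in, D be as defined, and set Q = D − A_eq^T D_eq^{-1} A_eq − A_in^T D_in^{-1} A_in. Suppose (V, μ, λ) ∈ ℝ^n × ℝ^p × ℝ^q satisfies the KKT system: A_eq^T μ + A_in^T λ + Q V = 0; A_eq V = b_eq; A_in V ≤ b_in; λ ≥ 0; and (A_in V − b_in)_i · λ_i = 0 for every i. Then, defining I_eq = D_eq μ, U_eq = D_eq^{-1} A_eq V − μ, I_in = D_in λ, and U_in = D_in^{-1} A_in V − λ, the tuple (V, U_eq, U_in, I_eq, I_in) is a solution of the no-cost circuit system. -/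

import Mathlib

open Matrix Finset

/-- A solution of the no-cost circuit system (circuit with no cost sub-circuit). -/
def NoCostCircuitSolution {n p q : ℕ} (Aeq : Matrix (Fin p) (Fin n) ℝ) (beq : Fin p → ℝ)
    (Ain : Matrix (Fin q) (Fin n) ℝ) (bin : Fin q → ℝ)
    (V : Fin n → ℝ) (Ueq : Fin p → ℝ) (Uin : Fin q → ℝ)
    (Ieq : Fin p → ℝ) (Iin : Fin q → ℝ) : Prop :=
  Aeq.mulVec V = (Matrix.diagonal fun i => ∑ j, Aeq i j).mulVec Ueq + Ieq ∧
  Ain.mulVec V = (Matrix.diagonal fun i => ∑ j, Ain i j).mulVec Uin + Iin ∧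
  Aeq.transpose.mulVec Ueq + Ain.transpose.mulVec Uin =
    (Matrix.diagonal fun j => (∑ i, Aeq i j) + (∑ i, Ain i j)).mulVec V ∧
  Aeq.mulVec V = beq ∧
  Ain.mulVec V ≤ bin ∧
  0 ≤ Iin ∧
  (∀ i, (Ain.mulVec V - bin) i * Iin i = 0)

/-- **From KKT points of the auxiliary QP to circuit solutions.** With
`Q = D − A_eqᵀ D_eq⁻¹ A_eq − A_inᵀ D_in⁻¹ A_in`, any KKT triple `(V, μ, λ)` yields a
solution of the no-cost circuit system via `I_eq = D_eq μ`, `U_eq = D_eq⁻¹ A_eq V − μ`,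
`I_in = D_in λ`, `U_in = D_in⁻¹ A_in V − λ`. -/
theorem kkt_gives_noCost_circuit_solution {n p q : ℕ}
    (Aeq : Matrix (Fin p) (Fin n) ℝ) (beq : Fin p → ℝ)
    (Ain : Matrix (Fin q) (Fin n) ℝ) (bin : Fin q → ℝ)
    (hAeq : ∀ i j, 0 ≤ Aeq i j)
    (hAin : ∀ i j, 0 ≤ Ain i j)
    (hAeqRow : ∀ i, 0 < ∑ j, Aeq i j)
    (hAinRow : ∀ i, 0 < ∑ j, Ain i j)
    (V : Fin n → ℝ) (μ : Fin p → ℝ) (lam : Fin q → ℝ)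
    -- the KKT system for the QP with matrix Q = D − A_eqᵀ D_eq⁻¹ A_eq − A_inᵀ D_in⁻¹ A_in
    (hstat : Aeq.transpose.mulVec μ + Ain.transpose.mulVec lam +
      ((Matrix.diagonal fun j => (∑ i, Aeq i j) + (∑ i, Ain i j)) -
        Aeq.transpose * (Matrix.diagonal fun i => (∑ j, Aeq i j)⁻¹) * Aeq -
        Ain.transpose * (Matrix.diagonal fun i => (∑ j, Ain i j)⁻¹) * Ain).mulVec V = 0)
    (heq : Aeq.mulVec V = beq)
    (hin : Ain.mulVec V ≤ bin)
    (hlam : 0 ≤ lam)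
    (hcompl : ∀ i, (Ain.mulVec V - bin) i * lam i = 0) :
    NoCostCircuitSolution Aeq beq Ain bin V
      ((Matrix.diagonal fun i => (∑ j, Aeq i j)⁻¹).mulVec (Aeq.mulVec V) - μ)
      ((Matrix.diagonal fun i => (∑ j, Ain i j)⁻¹).mulVec (Ain.mulVec V) - lam)
      ((Matrix.diagonal fun i => ∑ j, Aeq i j).mulVec μ)
      ((Matrix.diagonal fun i => ∑ j, Ain i j).mulVec lam) := by
  have hDeq : ∀ i, (∑ j, Aeq i j) ≠ 0 := fun i => (hAeqRow i).ne'
  have hDin : ∀ i, (∑ j, Ain i j) ≠ 0 := fun i => (hAinRow i).ne'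
  refine ⟨?_, ?_, ?_, heq, hin, ?_, ?_⟩
  · funext i
    have := hDeq i
    simp only [Pi.add_apply, mulVec_diagonal, Pi.sub_apply]
    field_simp
    ring
  · funext i
    have := hDin i
    simp only [Pi.add_apply, mulVec_diagonal, Pi.sub_apply]
    field_simp
    ring
  · have hs := hstat
    simp only [sub_mulVec, ← Matrix.mulVec_mulVec] at hs
    simp only [Matrix.mulVec_sub]
    funext j
    have := congrFun hs j
    simp only [Pi.add_apply, Pi.sub_apply, Pi.zero_apply] at this ⊢
    linarith
  · intro i
    simp only [Pi.zero_apply, mulVec_diagonal]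
    exact mul_nonneg (hAinRow i).le (hlam i)
  · intro i
    simp only [mulVec_diagonal]
    rw [show (Ain *ᵥ V - bin) i * ((∑ j, Ain i j) * lam i)
        = (∑ j, Ain i j) * ((Ain *ᵥ V - bin) i * lam i) by ring, hcompl i, mul_zero]
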